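/- Let N ≥ 0 and, for each 0 ≤ k ≤ N, let D_k and D'_k be finite multisets of pairs (a, b) ∈ ℝ² with a < b. Define φ = Σ_{k=0}^N (−1)^k Σ_{(a,b)∈D_k} (1_{[a,∞)} − 1_{[b,∞)}) and φ' = Σ_{k=0}^N (−1)^k Σ_{(a,b)∈D'_k} (1_{[a,∞)} − 1_{[b,∞)}). Then d(φ, φ') ≤ 2 · Σ_{k=0}^N W₁(D_k, D'_k). -/

import Mathlib

open scoped Classical ENNReal

/-- Indicator of `Q_u = [u, ∞)` on `ℝ`. -/
noncomputable def indR (u t : ℝ) : ℤ := if u ≤ t then 1 else 0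

/-- `(P, N)` is a decomposition of `φ` if `φ = Σ_{u ∈ P} 1_{[u,∞)} − Σ_{v ∈ N} 1_{[v,∞)}`. -/
def IsDecompR (φ : ℝ → ℤ) (P N : Multiset ℝ) : Prop :=
  ∀ t, φ t = (P.map fun u => indR u t).sum - (N.map fun u => indR u t).sum

/-- The signed 1-Wasserstein distance between finitely presented functions on `ℝ`. -/
noncomputable def signedDistR (φ φ' : ℝ → ℤ) : ℝ≥0∞ :=
  sInf { c : ℝ≥0∞ | ∃ (P N P' N' : Multiset ℝ) (pr : Multiset (ℝ × ℝ)),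
      IsDecompR φ P N ∧ IsDecompR φ' P' N' ∧
      pr.map Prod.fst = P + N' ∧ pr.map Prod.snd = N + P' ∧
      c = ENNReal.ofReal ((pr.map fun uv => |uv.1 - uv.2|).sum) }

/-- The 1-Wasserstein distance between persistence diagrams (finite multisets of pairs
`(a, b)` with `a < b`): the infimum over partial matchings (a multiset `pr` of matched
pairs together with the unmatched remainders `r`, `r'`) of the cost
`Σ_{matched} ‖x − η x‖_∞ + Σ_{unmatched (a,b)} (b − a)/2`. -/
noncomputable def W1 (D D' : Multiset (ℝ × ℝ)) : ℝ≥0∞ :=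
  sInf { c : ℝ≥0∞ | ∃ (pr : Multiset ((ℝ × ℝ) × (ℝ × ℝ))) (r r' : Multiset (ℝ × ℝ)),
      pr.map Prod.fst + r = D ∧ pr.map Prod.snd + r' = D' ∧
      c = ENNReal.ofReal ((pr.map fun xy => max |xy.1.1 - xy.2.1| |xy.1.2 - xy.2.2|).sum
        + ((r + r').map fun ab => (ab.2 - ab.1) / 2).sum) }

/-- Let `D_k, D'_k` (`k = 0, …, N`) be finite multisets of pairs
`(a, b) ∈ ℝ²` with `a < b`, and let `φ = Σ_k (−1)^k Σ_{(a,b) ∈ D_k} (1_{[a,∞)} − 1_{[b,∞)})`,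
similarly `φ'`. Then `d(φ, φ') ≤ 2 ⬝ Σ_k W₁(D_k, D'_k)`. -/
noncomputable def Pp (k : ℕ) (D : Multiset (ℝ × ℝ)) : Multiset ℝ :=
  if Even k then D.map Prod.fst else D.map Prod.snd

noncomputable def Np (k : ℕ) (D : Multiset (ℝ × ℝ)) : Multiset ℝ :=
  if Even k then D.map Prod.snd else D.map Prod.fst

noncomputable def prK (k : ℕ) (m : Multiset ((ℝ × ℝ) × (ℝ × ℝ))) (r r' : Multiset (ℝ × ℝ)) :
    Multiset (ℝ × ℝ) :=
  if Even k then
    m.map (fun xy => (xy.1.1, xy.2.1)) + m.map (fun xy => (xy.2.2, xy.1.2)) + r +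
      r'.map Prod.swap
  else
    m.map (fun xy => (xy.1.2, xy.2.2)) + m.map (fun xy => (xy.2.1, xy.1.1)) + r.map Prod.swap +
      r'

lemma prK_fst (k : ℕ) (m : Multiset ((ℝ × ℝ) × (ℝ × ℝ))) (r r' : Multiset (ℝ × ℝ)) :
    (prK k m r r').map Prod.fst = Pp k (m.map Prod.fst + r) + Np k (m.map Prod.snd + r') := by
  unfold prK Pp Np
  split <;> simp [Multiset.map_map, Function.comp] <;> abel

lemma prK_snd (k : ℕ) (m : Multiset ((ℝ × ℝ) × (ℝ × ℝ))) (r r' : Multiset (ℝ × ℝ)) :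
    (prK k m r r').map Prod.snd = Np k (m.map Prod.fst + r) + Pp k (m.map Prod.snd + r') := by
  unfold prK Pp Np
  split <;> simp [Multiset.map_map, Function.comp] <;> abel

lemma sum_map_sub {α : Type*} (s : Multiset α) (f g : α → ℤ) :
    (s.map fun x => f x - g x).sum = (s.map f).sum - (s.map g).sum := by
  induction s using Multiset.induction with
  | empty => simp
  | cons a s ih => simp [ih]; ring

lemma decomp_term (k : ℕ) (Dk : Multiset (ℝ × ℝ)) (t : ℝ) :
    (-1 : ℤ) ^ k * (Dk.map fun ab => indR ab.1 t - indR ab.2 t).sum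
      = ((Pp k Dk).map fun u => indR u t).sum - ((Np k Dk).map fun u => indR u t).sum := by
  unfold Pp Np
  rw [sum_map_sub]
  by_cases h : Even k
  · simp [h, Even.neg_one_pow h, Multiset.map_map, Function.comp]
  · simp only [h, if_false, Odd.neg_one_pow (Nat.not_even_iff_odd.mp h)]
    simp only [Multiset.map_map, Function.comp_def]
    ring

lemma sum_map_finsetSum {ι β : Type*} [AddCommMonoid β] (s : Finset ι) (m : ι → Multiset ℝ)
    (f : ℝ → β) : ((∑ i ∈ s, m i).map f).sum = ∑ i ∈ s, ((m i).map f).sum := by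
  induction s using Finset.cons_induction with
  | empty => simp
  | cons a s ha ih => rw [Finset.sum_cons, Finset.sum_cons, Multiset.map_add, Multiset.sum_add, ih]

lemma sum_mapPr_finsetSum {ι β : Type*} [AddCommMonoid β] (s : Finset ι)
    (m : ι → Multiset (ℝ × ℝ)) (f : ℝ × ℝ → β) :
    ((∑ i ∈ s, m i).map f).sum = ∑ i ∈ s, ((m i).map f).sum := by
  induction s using Finset.cons_induction with
  | empty => simp
  | cons a s ha ih => rw [Finset.sum_cons, Finset.sum_cons, Multiset.map_add, Multiset.sum_add, ih]

lemma sum_map_half {α : Type*} (s : Multiset α) (f : α → ℝ) :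
    (s.map fun x => f x / 2).sum = (s.map f).sum / 2 := by
  induction s using Multiset.induction with
  | empty => simp
  | cons a s ih => simp [ih]; ring

lemma prK_cost (k : ℕ) (m : Multiset ((ℝ × ℝ) × (ℝ × ℝ))) (r r' : Multiset (ℝ × ℝ))
    (hr : ∀ ab ∈ r, ab.1 < ab.2) (hr' : ∀ ab ∈ r', ab.1 < ab.2) :
    ((prK k m r r').map fun uv => |uv.1 - uv.2|).sum
      ≤ 2 * ((m.map fun xy => max |xy.1.1 - xy.2.1| |xy.1.2 - xy.2.2|).sum
        + ((r + r').map fun ab => (ab.2 - ab.1) / 2).sum) := by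
  have hrsum : ((r.map fun ab : ℝ × ℝ => |ab.1 - ab.2|).sum)
      = (r.map fun ab : ℝ × ℝ => ab.2 - ab.1).sum :=
    congrArg Multiset.sum (Multiset.map_congr rfl (fun ab hab => by
      rw [abs_sub_comm, abs_of_pos (by linarith [hr ab hab])]))
  have hrsum2 : ((r.map fun ab : ℝ × ℝ => |ab.2 - ab.1|).sum)
      = (r.map fun ab : ℝ × ℝ => ab.2 - ab.1).sum :=
    congrArg Multiset.sum (Multiset.map_congr rfl (fun ab hab => by
      rw [abs_of_pos (by linarith [hr ab hab])]))
  have hrsum' : ((r'.map fun ab : ℝ × ℝ => |ab.1 - ab.2|).sum)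
      = (r'.map fun ab : ℝ × ℝ => ab.2 - ab.1).sum :=
    congrArg Multiset.sum (Multiset.map_congr rfl (fun ab hab => by
      rw [abs_sub_comm, abs_of_pos (by linarith [hr' ab hab])]))
  have hrsum2' : ((r'.map fun ab : ℝ × ℝ => |ab.2 - ab.1|).sum)
      = (r'.map fun ab : ℝ × ℝ => ab.2 - ab.1).sum :=
    congrArg Multiset.sum (Multiset.map_congr rfl (fun ab hab => by
      rw [abs_of_pos (by linarith [hr' ab hab])]))
  have h1 : (m.map fun xy : (ℝ × ℝ) × (ℝ × ℝ) => |xy.1.1 - xy.2.1|).sum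
      ≤ (m.map fun xy => max |xy.1.1 - xy.2.1| |xy.1.2 - xy.2.2|).sum :=
    Multiset.sum_map_le_sum_map _ _ (fun i _ => le_max_left _ _)
  have h2 : (m.map fun xy : (ℝ × ℝ) × (ℝ × ℝ) => |xy.1.2 - xy.2.2|).sum
      ≤ (m.map fun xy => max |xy.1.1 - xy.2.1| |xy.1.2 - xy.2.2|).sum :=
    Multiset.sum_map_le_sum_map _ _ (fun i _ => le_max_right _ _)
  have half_r : (r.map fun ab : ℝ × ℝ => (ab.2 - ab.1) / 2).sum
      = (r.map fun ab : ℝ × ℝ => ab.2 - ab.1).sum / 2 := sum_map_half _ _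
  have half_r' : (r'.map fun ab : ℝ × ℝ => (ab.2 - ab.1) / 2).sum
      = (r'.map fun ab : ℝ × ℝ => ab.2 - ab.1).sum / 2 := sum_map_half _ _
  unfold prK
  split
  · simp only [Multiset.map_add, Multiset.sum_add, Multiset.map_map, Function.comp_def]
    have e3 : (m.map fun x : (ℝ × ℝ) × (ℝ × ℝ) => |x.2.2 - x.1.2|).sum
        = (m.map fun x : (ℝ × ℝ) × (ℝ × ℝ) => |x.1.2 - x.2.2|).sum :=
      congrArg Multiset.sum (Multiset.map_congr rfl (fun x _ => abs_sub_comm _ _))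
    have e4 : (r'.map fun x : ℝ × ℝ => |x.swap.1 - x.swap.2|).sum
        = (r'.map fun ab : ℝ × ℝ => |ab.2 - ab.1|).sum :=
      congrArg Multiset.sum (Multiset.map_congr rfl (fun x _ => by simp))
    simp only [Prod.fst_swap, Prod.snd_swap] at e4 ⊢
    linarith
  · simp only [Multiset.map_add, Multiset.sum_add, Multiset.map_map, Function.comp_def]
    have e3 : (m.map fun x : (ℝ × ℝ) × (ℝ × ℝ) => |x.2.1 - x.1.1|).sum
        = (m.map fun x : (ℝ × ℝ) × (ℝ × ℝ) => |x.1.1 - x.2.1|).sum :=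
      congrArg Multiset.sum (Multiset.map_congr rfl (fun x _ => abs_sub_comm _ _))
    have e4 : (r.map fun x : ℝ × ℝ => |x.swap.1 - x.swap.2|).sum
        = (r.map fun ab : ℝ × ℝ => |ab.2 - ab.1|).sum :=
      congrArg Multiset.sum (Multiset.map_congr rfl (fun x _ => by simp))
    simp only [Prod.fst_swap, Prod.snd_swap] at e4 ⊢
    linarith

lemma map_finsetSum' {ι α β : Type*} (s : Finset ι) (m : ι → Multiset α) (f : α → β) :
    (∑ i ∈ s, m i).map f = ∑ i ∈ s, (m i).map f := by
  induction s using Finset.cons_induction with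
  | empty => simp
  | cons a s ha ih => rw [Finset.sum_cons, Finset.sum_cons, Multiset.map_add, ih]

lemma ofReal_finsetSum_le {ι : Type*} (s : Finset ι) (f : ι → ℝ) :
    ENNReal.ofReal (∑ i ∈ s, f i) ≤ ∑ i ∈ s, ENNReal.ofReal (f i) := by
  induction s using Finset.cons_induction with
  | empty => simp
  | cons a s ha ih =>
    rw [Finset.sum_cons, Finset.sum_cons]
    exact le_trans (ENNReal.ofReal_add_le) (add_le_add le_rfl ih)

lemma W1_ne_top (D D' : Multiset (ℝ × ℝ)) : W1 D D' ≠ ⊤ := by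
  have hmem : ENNReal.ofReal (((0 : Multiset ((ℝ × ℝ) × (ℝ × ℝ))).map
      fun xy => max |xy.1.1 - xy.2.1| |xy.1.2 - xy.2.2|).sum
      + ((D + D').map fun ab : ℝ × ℝ => (ab.2 - ab.1) / 2).sum) ∈
      { c : ℝ≥0∞ | ∃ (pr : Multiset ((ℝ × ℝ) × (ℝ × ℝ))) (r r' : Multiset (ℝ × ℝ)),
      pr.map Prod.fst + r = D ∧ pr.map Prod.snd + r' = D' ∧
      c = ENNReal.ofReal ((pr.map fun xy => max |xy.1.1 - xy.2.1| |xy.1.2 - xy.2.2|).sum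
        + ((r + r').map fun ab => (ab.2 - ab.1) / 2).sum) } :=
    ⟨0, D, D', by simp, by simp, rfl⟩
  exact ne_top_of_le_ne_top ENNReal.ofReal_ne_top (sInf_le hmem)

theorem stmt5 (N : ℕ) (D D' : Fin (N + 1) → Multiset (ℝ × ℝ))
    (hD : ∀ k, ∀ ab ∈ D k, ab.1 < ab.2) (hD' : ∀ k, ∀ ab ∈ D' k, ab.1 < ab.2) :
    signedDistR
        (fun t => ∑ k : Fin (N + 1), (-1 : ℤ) ^ (k : ℕ) *
          ((D k).map fun ab => indR ab.1 t - indR ab.2 t).sum)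
        (fun t => ∑ k : Fin (N + 1), (-1 : ℤ) ^ (k : ℕ) *
          ((D' k).map fun ab => indR ab.1 t - indR ab.2 t).sum)
      ≤ 2 * ∑ k : Fin (N + 1), W1 (D k) (D' k) := by
  apply ENNReal.le_of_forall_pos_le_add
  intro ε hε _
  set δ : ℝ≥0∞ := (ε : ℝ≥0∞) / (2 * (N + 1)) with hδdef
  have hδ0 : δ ≠ 0 := by
    rw [hδdef]
    refine ENNReal.div_ne_zero.mpr ⟨by exact_mod_cast hε.ne', ?_⟩
    exact ENNReal.mul_ne_top (by simp) (by simp)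
  have key : ∀ k : Fin (N + 1), ∃ (m : Multiset ((ℝ × ℝ) × (ℝ × ℝ)))
      (r r' : Multiset (ℝ × ℝ)),
      m.map Prod.fst + r = D k ∧ m.map Prod.snd + r' = D' k ∧
      ENNReal.ofReal ((m.map fun xy => max |xy.1.1 - xy.2.1| |xy.1.2 - xy.2.2|).sum
        + ((r + r').map fun ab => (ab.2 - ab.1) / 2).sum) < W1 (D k) (D' k) + δ := by
    intro k
    have hlt : W1 (D k) (D' k) < W1 (D k) (D' k) + δ :=
      ENNReal.lt_add_right (W1_ne_top _ _) hδ0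
    rw [W1] at hlt
    obtain ⟨c, hc, hclt⟩ := sInf_lt_iff.mp hlt
    obtain ⟨m, r, r', h1, h2, rfl⟩ := hc
    exact ⟨m, r, r', h1, h2, hclt⟩
  choose m r r' hfst hsnd hcost using key
  have hrD : ∀ k, ∀ ab ∈ r k, ab.1 < ab.2 := fun k ab hab =>
    hD k ab (by rw [← hfst k]; exact Multiset.mem_add.mpr (Or.inr hab))
  have hrD' : ∀ k, ∀ ab ∈ r' k, ab.1 < ab.2 := fun k ab hab =>
    hD' k ab (by rw [← hsnd k]; exact Multiset.mem_add.mpr (Or.inr hab))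
  set pr : Multiset (ℝ × ℝ) := ∑ k : Fin (N + 1), prK k (m k) (r k) (r' k) with hprdef
  have hmem : ENNReal.ofReal ((pr.map fun uv => |uv.1 - uv.2|).sum) ∈
      { c : ℝ≥0∞ | ∃ (P Nn P' N' : Multiset ℝ) (pr : Multiset (ℝ × ℝ)),
        IsDecompR (fun t => ∑ k : Fin (N + 1), (-1 : ℤ) ^ (k : ℕ) *
          ((D k).map fun ab => indR ab.1 t - indR ab.2 t).sum) P Nn ∧
        IsDecompR (fun t => ∑ k : Fin (N + 1), (-1 : ℤ) ^ (k : ℕ) *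
          ((D' k).map fun ab => indR ab.1 t - indR ab.2 t).sum) P' N' ∧
        pr.map Prod.fst = P + N' ∧ pr.map Prod.snd = Nn + P' ∧
        c = ENNReal.ofReal ((pr.map fun uv => |uv.1 - uv.2|).sum) } := by
    refine ⟨∑ k : Fin (N + 1), Pp k (D k), ∑ k : Fin (N + 1), Np k (D k),
      ∑ k : Fin (N + 1), Pp k (D' k), ∑ k : Fin (N + 1), Np k (D' k), pr, ?_, ?_, ?_, ?_, rfl⟩
    · intro t
      rw [sum_map_finsetSum, sum_map_finsetSum, ← Finset.sum_sub_distrib]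
      exact Finset.sum_congr rfl fun k _ => decomp_term k (D k) t
    · intro t
      rw [sum_map_finsetSum, sum_map_finsetSum, ← Finset.sum_sub_distrib]
      exact Finset.sum_congr rfl fun k _ => decomp_term k (D' k) t
    · rw [hprdef, map_finsetSum', ← Finset.sum_add_distrib]
      refine Finset.sum_congr rfl fun k _ => ?_
      rw [prK_fst, hfst, hsnd]
    · rw [hprdef, map_finsetSum', ← Finset.sum_add_distrib]
      refine Finset.sum_congr rfl fun k _ => ?_
      rw [prK_snd, hfst, hsnd]
  refine le_trans (sInf_le hmem) ?_
  have hsplit : ((pr.map fun uv => |uv.1 - uv.2|).sum)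
      = ∑ k : Fin (N + 1), (((prK k (m k) (r k) (r' k)).map fun uv => |uv.1 - uv.2|).sum) :=
    sum_mapPr_finsetSum _ _ _
  rw [hsplit]
  calc ENNReal.ofReal (∑ k : Fin (N + 1),
          (((prK k (m k) (r k) (r' k)).map fun uv => |uv.1 - uv.2|).sum))
      ≤ ∑ k : Fin (N + 1), ENNReal.ofReal
          (((prK k (m k) (r k) (r' k)).map fun uv => |uv.1 - uv.2|).sum) :=
        ofReal_finsetSum_le _ _
    _ ≤ ∑ k : Fin (N + 1), 2 * (W1 (D k) (D' k) + δ) := by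
        refine Finset.sum_le_sum fun k _ => ?_
        have hle := prK_cost k (m k) (r k) (r' k) (hrD k) (hrD' k)
        refine le_trans (ENNReal.ofReal_le_ofReal hle) ?_
        rw [ENNReal.ofReal_mul (by norm_num)]
        rw [show ENNReal.ofReal 2 = 2 by norm_num]
        exact mul_le_mul' le_rfl (le_of_lt (hcost k))
    _ ≤ 2 * ∑ k : Fin (N + 1), W1 (D k) (D' k) + ε := by
        simp only [mul_add, Finset.sum_add_distrib, Finset.mul_sum]
        rw [Finset.sum_const, Finset.card_univ, Fintype.card_fin]
        refine add_le_add le_rfl ?_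
        rw [hδdef]
        rw [nsmul_eq_mul]
        rw [show ((N+1 : ℕ) : ℝ≥0∞) * (2 * ((ε : ℝ≥0∞) / (2 * (N + 1))))
          = (2 * (N+1)) * ((ε : ℝ≥0∞) / (2 * (N + 1))) by push_cast; ring]
        rw [ENNReal.mul_div_cancel' (by simp) (fun h => absurd h (show (2 * ((N : ℝ≥0∞) + 1)) ≠ ⊤ from ENNReal.mul_ne_top (by simp) (by simp)))]
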